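/- For fixed r ≥ 2, if X_1^{(n)}, ..., X_r^{(n)} are independent uniform random variables on {1,...,n}, then lim_{n→∞} P(gcd(X_1^{(n)}, ..., X_r^{(n)}) = 1) = 1/ζ(r). -/

import Mathlib

open Finset

open Finset ArithmeticFunction Filter LSeries
open scoped ArithmeticFunction.Moebius ArithmeticFunction.zeta

-- counting identity
lemma count_eq (r n : ℕ) (hr : 1 ≤ r) (_hn : 1 ≤ n) :
    ((((Fintype.piFinset fun _ : Fin r => Finset.Icc 1 n).filter
        (fun a : Fin r → ℕ => Finset.univ.gcd a = 1)).card : ℤ)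
      = ∑ d ∈ Finset.Icc 1 n, μ d * ((n / d : ℕ) : ℤ) ^ r) := by
  classical
  set S := Fintype.piFinset fun _ : Fin r => Finset.Icc 1 n with hS
  have step1 : ((S.filter (fun a : Fin r → ℕ => Finset.univ.gcd a = 1)).card : ℤ)
      = ∑ a ∈ S, (if Finset.univ.gcd a = 1 then (1 : ℤ) else 0) := by
    rw [Finset.card_filter]
    push_cast
    rfl
  rw [step1]
  have key : ∀ a ∈ S, (if Finset.univ.gcd a = 1 then (1 : ℤ) else 0)
      = ∑ d ∈ Finset.Icc 1 n, (if d ∣ Finset.univ.gcd a then (μ d : ℤ) else 0) := by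
    intro a ha
    set m := Finset.univ.gcd a with hm
    have hi0 : a ⟨0, hr⟩ ∈ Finset.Icc 1 n := by
      rw [hS, Fintype.mem_piFinset] at ha; exact ha _
    have hia := Finset.mem_Icc.mp hi0
    have hmd : m ∣ a ⟨0, hr⟩ := Finset.gcd_dvd (Finset.mem_univ _)
    have hm0 : m ≠ 0 := by
      intro h
      rw [h] at hmd
      simp only [zero_dvd_iff] at hmd
      omega
    have hmn : m ≤ n := le_trans (Nat.le_of_dvd (by omega) hmd) hia.2
    have hdiv : m.divisors = (Finset.Icc 1 n).filter (· ∣ m) := by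
      ext d
      simp only [Nat.mem_divisors, Finset.mem_filter, Finset.mem_Icc]
      constructor
      · rintro ⟨hd, -⟩
        exact ⟨⟨Nat.one_le_iff_ne_zero.mpr (by rintro rfl; exact hm0 (zero_dvd_iff.mp hd)),
          le_trans (Nat.le_of_dvd (Nat.pos_of_ne_zero hm0) hd) hmn⟩, hd⟩
      · rintro ⟨-, hd⟩; exact ⟨hd, hm0⟩
    have := congrArg (fun f : ArithmeticFunction ℤ => f m) moebius_mul_coe_zeta
    simp only [coe_mul_zeta_apply, one_apply] at this
    rw [← Finset.sum_filter, ← hdiv, this]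
  rw [Finset.sum_congr rfl key, Finset.sum_comm]
  refine Finset.sum_congr rfl fun d hd => ?_
  have hd1 := (Finset.mem_Icc.mp hd).1
  have : ∀ a : Fin r → ℕ, d ∣ Finset.univ.gcd a ↔ ∀ i : Fin r, d ∣ a i := by
    intro a; rw [Finset.dvd_gcd_iff]; simp
  rw [← Finset.sum_filter, Finset.sum_const, nsmul_eq_mul]
  have hfilt : S.filter (fun a => d ∣ Finset.univ.gcd a)
      = Fintype.piFinset (fun _ : Fin r => (Finset.Icc 1 n).filter (d ∣ ·)) := by
    ext a
    simp only [Finset.mem_filter, hS, Fintype.mem_piFinset, this, forall_and]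
  rw [hfilt, Fintype.card_piFinset]
  have : ((Finset.Icc 1 n).filter (d ∣ ·)).card = n / d := by
    have : Finset.Icc 1 n = Finset.Ioc 0 n := rfl
    rw [this, Nat.Ioc_filter_dvd_card_eq_div]
  simp [this, mul_comm]

open Finset ArithmeticFunction Filter LSeries

lemma nat_div_tendsto (d : ℕ) (hd : 1 ≤ d) :
    Tendsto (fun n : ℕ => ((n / d : ℕ) : ℝ) / (n : ℝ)) atTop (nhds (1 / (d : ℝ))) := by
  have hd0 : (0 : ℝ) < d := by exact_mod_cast hd
  have hlow : Tendsto (fun n : ℕ => 1 / (d : ℝ) - 1 / (n : ℝ)) atTop (nhds (1 / (d : ℝ))) := by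
    simpa using tendsto_const_nhds.sub (tendsto_one_div_atTop_nhds_zero_nat (𝕜 := ℝ))
  refine tendsto_of_tendsto_of_tendsto_of_le_of_le' hlow tendsto_const_nhds ?_ ?_
  · filter_upwards [eventually_ge_atTop 1] with n hn
    have hn0 : (0 : ℝ) < n := by exact_mod_cast hn
    have hnat : n < d * (n / d) + d := by
      have h1 := Nat.div_add_mod n d
      have h2 := Nat.mod_lt n (show 0 < d by omega)
      omega
    have hreal : (n : ℝ) < d * ((n / d : ℕ) : ℝ) + d := by exact_mod_cast hnat
    have : (n : ℝ) / d - 1 ≤ ((n / d : ℕ) : ℝ) := by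
      rw [div_sub_one (ne_of_gt hd0), div_le_iff₀ hd0]
      nlinarith
    calc 1 / (d : ℝ) - 1 / n = ((n : ℝ) / d - 1) / n := by field_simp
      _ ≤ ((n / d : ℕ) : ℝ) / n := by gcongr
  · filter_upwards [eventually_ge_atTop 1] with n hn
    have hn0 : (0 : ℝ) < n := by exact_mod_cast hn
    have h1 : ((n / d : ℕ) : ℝ) ≤ (n : ℝ) / d := Nat.cast_div_le
    calc ((n / d : ℕ) : ℝ) / n ≤ ((n : ℝ) / d) / n := by gcongr
      _ = 1 / d := by field_simp

lemma moebius_tsum_eq (r : ℕ) (hr : 2 ≤ r) :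
    (∑' d : ℕ, (μ d : ℝ) / (d : ℝ) ^ r) * (∑' n : ℕ, 1 / ((n : ℝ) + 1) ^ r) = 1 := by
  have hs : 1 < (r : ℂ).re := by
    simp only [Complex.natCast_re]
    exact_mod_cast lt_of_lt_of_le one_lt_two hr
  have hmain := LSeries_zeta_mul_Lseries_moebius hs
  have hZ : LSeries (fun n => (ζ n : ℂ)) (r : ℂ) = ((∑' n : ℕ, 1 / ((n : ℝ) + 1) ^ r : ℝ) : ℂ) := by
    rw [Complex.ofReal_tsum, LSeries]
    rw [Summable.tsum_eq_zero_add (LSeriesSummable_zeta_iff.mpr hs)]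
    rw [term_zero, zero_add]
    refine tsum_congr fun n => ?_
    rw [term_of_ne_zero (Nat.succ_ne_zero n)]
    have : ζ (n + 1) = 1 := by simp [ArithmeticFunction.zeta_apply]
    rw [this]
    push_cast
    rw [Complex.cpow_natCast]
  have hM : LSeries (fun n => (μ n : ℂ)) (r : ℂ)
      = ((∑' d : ℕ, (μ d : ℝ) / (d : ℝ) ^ r : ℝ) : ℂ) := by
    rw [Complex.ofReal_tsum, LSeries]
    refine tsum_congr fun n => ?_
    rcases eq_or_ne n 0 with rfl | hn
    · simp
    · rw [term_of_ne_zero hn]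
      push_cast
      rw [Complex.cpow_natCast]
  rw [hZ, hM, ← Complex.ofReal_mul] at hmain
  rw [mul_comm]
  exact_mod_cast hmain

/-- For fixed `r ≥ 2`, the probability that `r` independent uniform random variables on
`{1,…,n}` are mutually coprime tends to `1/ζ(r)` as `n → ∞`. -/
theorem stmt_14 (r : ℕ) (hr : 2 ≤ r) :
    Filter.Tendsto
      (fun n : ℕ =>
        ((((Fintype.piFinset fun _ : Fin r => Finset.Icc 1 n).filter
            (fun a : Fin r → ℕ => Finset.univ.gcd a = 1)).card : ℝ)) / (n : ℝ) ^ r)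
      Filter.atTop
      (nhds (1 / ∑' n : ℕ, 1 / ((n : ℝ) + 1) ^ (r : ℝ))) := by

  have hr1 : 1 ≤ r := by omega
  have hrpow : (∑' n : ℕ, 1 / ((n : ℝ) + 1) ^ (r : ℝ)) = ∑' n : ℕ, 1 / ((n : ℝ) + 1) ^ r := by
    refine tsum_congr fun n => ?_
    rw [Real.rpow_natCast]
  rw [hrpow]
  set Z : ℝ := ∑' n : ℕ, 1 / ((n : ℝ) + 1) ^ r with hZdef
  set M : ℝ := ∑' d : ℕ, (μ d : ℝ) / (d : ℝ) ^ r with hMdef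
  have hMZ : M * Z = 1 := moebius_tsum_eq r hr
  have hZ0 : Z ≠ 0 := right_ne_zero_of_mul_eq_one hMZ
  have hMval : M = 1 / Z := by field_simp; linarith [hMZ]
  rw [← hMval]
  -- the summand family
  set f : ℕ → ℕ → ℝ :=
    fun n d => (μ d : ℝ) * ((n / d : ℕ) : ℝ) ^ r / (n : ℝ) ^ r with hfdef
  have hmain : Tendsto (fun n : ℕ => ∑' d : ℕ, f n d) atTop (nhds M) := by
    refine tendsto_tsum_of_dominated_convergence (bound := fun d : ℕ => 1 / (d : ℝ) ^ r)
      (Real.summable_one_div_nat_pow.mpr (by omega)) ?_ ?_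
    · intro d
      rcases eq_or_ne d 0 with rfl | hd
      · simpa [hfdef] using (tendsto_const_nhds :
          Tendsto (fun _ : ℕ => (0 : ℝ)) atTop (nhds 0))
      · have hd1 : 1 ≤ d := Nat.one_le_iff_ne_zero.mpr hd
        have key : Tendsto (fun n : ℕ => (μ d : ℝ) * (((n / d : ℕ) : ℝ) / (n : ℝ)) ^ r)
            atTop (nhds ((μ d : ℝ) * (1 / (d : ℝ)) ^ r)) :=
          (((nat_div_tendsto d hd1).pow r).const_mul _)
        have heq : ∀ n : ℕ, (μ d : ℝ) * (((n / d : ℕ) : ℝ) / (n : ℝ)) ^ r = f n d := by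
          intro n; rw [hfdef]; rw [div_pow]; ring
        have heq2 : (μ d : ℝ) * (1 / (d : ℝ)) ^ r = (μ d : ℝ) / (d : ℝ) ^ r := by
          rw [div_pow, one_pow]; ring
        rw [heq2] at key
        exact key.congr heq
    · filter_upwards [eventually_ge_atTop 1] with n hn
      intro d
      rcases eq_or_ne d 0 with rfl | hd
      · simp [hfdef]
      · have hd0 : (0 : ℝ) < d := by exact_mod_cast Nat.pos_of_ne_zero hd
        have hn0 : (0 : ℝ) < n := by exact_mod_cast hn
        have h1 : |(μ d : ℝ)| ≤ 1 := by exact_mod_cast abs_moebius_le_one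
        have h2 : ((n / d : ℕ) : ℝ) ^ r ≤ ((n : ℝ) / d) ^ r := by
          gcongr
          exact Nat.cast_div_le
        have h3 : ((n : ℝ) / d) ^ r / (n : ℝ) ^ r = 1 / (d : ℝ) ^ r := by
          rw [div_pow]; field_simp
        calc ‖f n d‖ = |(μ d : ℝ)| * ((n / d : ℕ) : ℝ) ^ r / (n : ℝ) ^ r := by
              simp only [hfdef, Real.norm_eq_abs, abs_div, abs_mul, abs_pow,
                abs_of_nonneg (show (0:ℝ) ≤ ((n / d : ℕ) : ℝ) from Nat.cast_nonneg _),
                abs_of_nonneg (show (0:ℝ) ≤ (n : ℝ) from Nat.cast_nonneg _)]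
          _ ≤ 1 * ((n : ℝ) / d) ^ r / (n : ℝ) ^ r := by gcongr
          _ = 1 / (d : ℝ) ^ r := by rw [one_mul, h3]
  refine hmain.congr' ?_
  filter_upwards [eventually_ge_atTop 1] with n hn
  have h0 : ∀ d ∉ Finset.Icc 1 n, f n d = 0 := by
    intro d hd
    rw [Finset.mem_Icc] at hd
    push_neg at hd
    rcases eq_or_ne d 0 with rfl | hd0
    · simp [hfdef]
    · have hnd : n / d = 0 := Nat.div_eq_of_lt (hd (Nat.one_le_iff_ne_zero.mpr hd0))
      simp [hfdef, hnd, zero_pow (by omega : r ≠ 0)]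
  rw [tsum_eq_sum h0]
  have hcount := count_eq r n hr1 hn
  have hcast : ((((Fintype.piFinset fun _ : Fin r => Finset.Icc 1 n).filter
      (fun a : Fin r → ℕ => Finset.univ.gcd a = 1)).card : ℝ))
      = ∑ d ∈ Finset.Icc 1 n, (μ d : ℝ) * ((n / d : ℕ) : ℝ) ^ r := by
    have h2 : ((((Fintype.piFinset fun _ : Fin r => Finset.Icc 1 n).filter
        (fun a : Fin r → ℕ => Finset.univ.gcd a = 1)).card : ℤ) : ℝ)
        = ((∑ d ∈ Finset.Icc 1 n, μ d * ((n / d : ℕ) : ℤ) ^ r : ℤ) : ℝ) := by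
      rw [hcount]
    push_cast at h2
    exact h2
  rw [hcast, Finset.sum_div]
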